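/- There is a computable function h : ℕ → ℕ such that for every n : ℕ: if W_n is finite then W_{h(n)} = {k : ℕ | k < ncard(W_n)} (in particular W_{h(n)} = ∅ when W_n = ∅), and if W_n is infinite then W_{h(n)} = ℕ. -/

import Mathlib

/-- `WSet e` is the domain of the `e`-th partial recursive function. -/
def WSet (e : ℕ) : Set ℕ :=
  {m : ℕ | ((Denumerable.ofNat Nat.Partrec.Code e).eval m).Dom}

open Nat.Partrec Nat.Partrec.Code

/-- number of `m < s` that halt within `s` steps on machine `n` -/
def cnt (n s : ℕ) : ℕ :=
  (List.range s).foldl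
    (fun acc m => acc + cond (evaln s (Denumerable.ofNat Code n) m).isSome 1 0) 0

theorem cnt_primrec : Primrec₂ cnt := by
  have h1 : Primrec fun a : ℕ × ℕ => List.range a.2 :=
    Primrec.list_range.comp Primrec.snd
  have hev : Primrec fun a : (ℕ × ℕ) × ℕ × ℕ =>
      (evaln a.1.2 (Denumerable.ofNat Code a.1.1) a.2.2).isSome := by
    refine Primrec.option_isSome.comp ?_
    exact primrec_evaln.comp
      (((Primrec.snd.comp Primrec.fst).pair
        ((Primrec.ofNat Code).comp (Primrec.fst.comp Primrec.fst))).pair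
        (Primrec.snd.comp Primrec.snd))
  have h2 : Primrec₂ fun (a : ℕ × ℕ) (b : ℕ × ℕ) =>
      b.1 + cond (evaln a.2 (Denumerable.ofNat Code a.1) b.2).isSome 1 0 := by
    refine Primrec₂.mk ?_
    exact Primrec.nat_add.comp (Primrec.fst.comp Primrec.snd)
      (Primrec.cond hev (Primrec.const 1) (Primrec.const 0))
  exact Primrec.list_foldl h1 (Primrec.const 0) h2


/-- the finset counted by `cnt` -/
def cntSet (n s : ℕ) : Finset ℕ :=
  (Finset.range s).filter fun m => (evaln s (Denumerable.ofNat Code n) m).isSome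

theorem foldl_count (p : ℕ → Bool) (l : List ℕ) (a : ℕ) :
    l.foldl (fun acc m => acc + cond (p m) 1 0) a = a + l.countP p := by
  induction l generalizing a with
  | nil => simp
  | cons x xs ih =>
    simp only [List.foldl_cons, List.countP_cons, ih]
    cases hx : p x <;> simp [hx] <;> try omega

theorem countP_range (p : ℕ → Bool) (s : ℕ) :
    (List.range s).countP p = ((Finset.range s).filter (fun m => p m)).card := by
  induction s with
  | zero => simp
  | succ s ih =>
    rw [List.range_succ, List.countP_append, Finset.range_add_one, Finset.filter_insert, ih]
    by_cases h : p s
    · rw [if_pos h, Finset.card_insert_of_notMem (by simp)]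
      simp [h]
    · rw [if_neg h]
      simp [h]

theorem cnt_eq_card (n s : ℕ) : cnt n s = (cntSet n s).card := by
  rw [cnt, foldl_count, Nat.zero_add, cntSet, countP_range]

theorem cntSet_subset (n s : ℕ) : ↑(cntSet n s) ⊆ WSet n := by
  intro m hm
  simp only [cntSet, Finset.coe_filter, Set.mem_setOf_eq, Finset.mem_range] at hm
  obtain ⟨-, hm⟩ := hm
  rw [Option.isSome_iff_exists] at hm
  obtain ⟨x, hx⟩ := hm
  exact Part.dom_iff_mem.mpr ⟨x, evaln_sound hx⟩

theorem exists_cnt_ge {n : ℕ} (t : Finset ℕ) (ht : ↑t ⊆ WSet n) :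
    ∃ s, t.card ≤ cnt n s := by
  classical
  have hw : ∀ m ∈ t, ∃ s, (evaln s (Denumerable.ofNat Code n) m).isSome := by
    intro m hm
    have := ht hm
    rw [WSet, Set.mem_setOf_eq, Part.dom_iff_mem] at this
    obtain ⟨x, hx⟩ := this
    obtain ⟨s, hs⟩ := evaln_complete.mp hx
    exact ⟨s, Option.isSome_iff_exists.mpr ⟨x, hs⟩⟩
  choose w hwspec using hw
  set S : ℕ := t.sup fun m => max (m + 1) (if hm : m ∈ t then w m hm else 0) with hS
  refine ⟨S, ?_⟩
  rw [cnt_eq_card]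
  refine Finset.card_le_card ?_
  intro m hm
  have hle : max (m + 1) (if hmm : m ∈ t then w m hmm else 0) ≤ S :=
    Finset.le_sup (f := fun m => max (m + 1) (if hm : m ∈ t then w m hm else 0)) hm
  rw [dif_pos hm, max_le_iff] at hle
  simp only [cntSet, Finset.mem_filter, Finset.mem_range]
  refine ⟨by omega, ?_⟩
  rw [Option.isSome_iff_exists]
  have := hwspec m hm
  rw [Option.isSome_iff_exists] at this
  obtain ⟨x, hx⟩ := this
  exact ⟨x, evaln_mono hle.2 hx⟩

theorem cnt_le_ncard {n : ℕ} (hfin : (WSet n).Finite) (s : ℕ) :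
    cnt n s ≤ (WSet n).ncard := by
  rw [cnt_eq_card, ← Set.ncard_coe_finset]
  exact Set.ncard_le_ncard (cntSet_subset n s) hfin

theorem key_fin {n k : ℕ} (hfin : (WSet n).Finite) :
    (∃ s, k < cnt n s) ↔ k < (WSet n).ncard := by
  constructor
  · rintro ⟨s, hs⟩
    exact lt_of_lt_of_le hs (cnt_le_ncard hfin s)
  · intro hk
    obtain ⟨s, hs⟩ := exists_cnt_ge (n := n) hfin.toFinset (by rw [Set.Finite.coe_toFinset])
    rw [Set.ncard_eq_toFinset_card _ hfin] at hk
    exact ⟨s, lt_of_lt_of_le hk hs⟩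

theorem key_inf {n k : ℕ} (hinf : (WSet n).Infinite) : ∃ s, k < cnt n s := by
  obtain ⟨t, hts, htc⟩ := hinf.exists_subset_card_eq (k + 1)
  obtain ⟨s, hs⟩ := exists_cnt_ge t hts
  exact ⟨s, by omega⟩


theorem exists_computable_crush_function :
    ∃ h : ℕ → ℕ, Computable h ∧ ∀ n : ℕ,
      ((WSet n).Finite → WSet (h n) = {k : ℕ | k < (WSet n).ncard}) ∧
      ((WSet n).Infinite → WSet (h n) = Set.univ) := by
  have hb : Primrec₂ fun (x s : ℕ) => decide (x.unpair.2 < cnt x.unpair.1 s) :=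
    (Primrec.nat_lt.comp
      (Primrec.snd.comp (Primrec.unpair.comp Primrec.fst))
      (cnt_primrec.comp (Primrec.fst.comp (Primrec.unpair.comp Primrec.fst)) Primrec.snd)).decide
  have hF : Partrec fun x : ℕ =>
      Nat.rfind fun s => Part.some (decide (x.unpair.2 < cnt x.unpair.1 s)) :=
    Partrec.rfind (hb.to_comp.partrec₂)
  obtain ⟨c, hc⟩ := exists_code.mp (Partrec.nat_iff.mp hF)
  obtain ⟨f, fcomp, feval⟩ := smn
  refine ⟨fun n => Encodable.encode (f c n),
    Computable.encode.comp (fcomp.comp (Computable.const c) Computable.id), fun n => ?_⟩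
  have hdom : ∀ k, k ∈ WSet (Encodable.encode (f c n)) ↔ ∃ s, k < cnt n s := by
    intro k
    show ((Denumerable.ofNat Code (Encodable.encode (f c n))).eval k).Dom ↔ _
    rw [Denumerable.ofNat_encode, feval, hc]
    exact Nat.rfind_dom.trans ⟨fun ⟨s, hs, _⟩ => ⟨s, by simpa using hs⟩, fun ⟨s, hs⟩ => ⟨s, by simpa using hs, fun _ => trivial⟩⟩
  constructor
  · intro hfin
    ext k
    rw [Set.mem_setOf_eq, ← key_fin hfin]
    exact hdom k
  · intro hinf
    ext k
    simp only [Set.mem_univ, iff_true]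
    exact (hdom k).mpr (key_inf hinf)
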